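/- Let X be a Polish space and let E be a coanalytic equivalence relation on X. Then there exists a family (E_α)_{α<ω₁} of Borel subsets of X × X such that: (i) whenever α ≤ β < ω₁, E_α ⊆ E_β; (ii) the graph of E equals ⋃_{α<ω₁} E_α; and (iii) there is a club set C of ordinals below ω₁ such that for every α ∈ C, E_α is the graph of an equivalence relation on X. -/

import Mathlib

open MeasureTheory Set

/-- The first uncountable ordinal `ω₁`. -/
noncomputable def omega1 : Ordinal := (Cardinal.aleph 1).ord

namespace CoanAux
universe v u

theorem omega1_isLimit : Order.IsSuccLimit omega1.{v} :=
  Cardinal.isSuccLimit_ord (le_of_lt Cardinal.aleph0_lt_aleph_one)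

theorem omega1_pos : (0 : Ordinal.{v}) < omega1.{v} := omega1_isLimit.pos

theorem succ_lt_omega1 {α : Ordinal.{v}} (h : α < omega1.{v}) : α + 1 < omega1.{v} := by
  rw [Ordinal.add_one_eq_succ]; exact omega1_isLimit.succ_lt h

theorem card_le_aleph0 {α : Ordinal.{v}} (h : α < omega1.{v}) : α.card ≤ Cardinal.aleph0 := by
  have := Cardinal.lt_ord.1 h
  rwa [← Cardinal.succ_aleph0, Order.lt_succ_iff] at this

theorem countable_Iio {α : Ordinal.{v}} (h : α < omega1.{v}) : (Set.Iio α).Countable := by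
  rw [← Set.countable_coe_iff, ← Cardinal.mk_le_aleph0_iff, Ordinal.mk_Iio_ordinal]
  exact le_trans (Cardinal.lift_le.2 (card_le_aleph0 h)) (by simp)

/-- rank of an element in a well-founded relation -/
noncomputable def wrank {α : Type v} {r : α → α → Prop} (h : WellFounded r) (a : α) :
    Ordinal.{v} := (h.apply a).rank

theorem wrank_lt {α : Type v} {r : α → α → Prop} (h : WellFounded r) {a b : α} (hab : r a b) :
    wrank h a < wrank h b := Acc.rank_lt_of_rel (h.apply b) hab

theorem wrank_eq {α : Type v} {r : α → α → Prop} (h : WellFounded r) (a : α) :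
    wrank h a = ⨆ b : { b // r b a }, Order.succ (wrank h b) := Acc.rank_eq _

theorem wrank_lt_omega1 {α : Type v} [Countable α] {r : α → α → Prop} (h : WellFounded r)
    (a : α) : wrank h a < omega1.{v} := by
  induction a using h.induction with
  | _ a IH =>
    rw [wrank_eq]
    refine Cardinal.iSup_lt_ord_of_isRegular Cardinal.isRegular_aleph_one
      (lt_of_le_of_lt Cardinal.mk_le_aleph0 Cardinal.aleph0_lt_aleph_one) fun b => ?_
    exact omega1_isLimit.succ_lt (IH b.1 b.2)

theorem wrank_le_of_hom {α β : Type v} {r : α → α → Prop} {r' : β → β → Prop}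
    (h : WellFounded r) (h' : WellFounded r') (φ : α → β)
    (hφ : ∀ a b, r a b → r' (φ a) (φ b)) (a : α) : wrank h a ≤ wrank h' (φ a) := by
  induction a using h.induction with
  | _ a IH =>
    rw [wrank_eq]
    refine Ordinal.iSup_le fun b => ?_
    rw [Order.succ_le_iff]
    exact lt_of_le_of_lt (IH b.1 b.2) (wrank_lt h' (hφ b.1 a b.2))

theorem omega1_unbounded_iterate (φ' : Ordinal.{v} → Ordinal.{v})
    (hmono : ∀ {a b : Ordinal.{v}}, a ≤ b → φ' a ≤ φ' b)
    (hself : ∀ a < omega1.{v}, a < φ' a)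
    (hlt : ∀ a < omega1.{v}, φ' a < omega1.{v})
    {α : Ordinal.{v}} (hα : α < omega1.{v}) :
    ∃ β : Ordinal.{v}, β < omega1.{v} ∧ α ≤ β ∧ 0 < β ∧ ∀ γ < β, φ' γ < β := by
  have hlt1 : ∀ δ : Ordinal.{v}, δ < δ + 1 := fun δ =>
    (Ordinal.add_one_eq_succ δ) ▸ Order.lt_succ δ
  set ψ : ℕ → Ordinal.{v} := fun n => φ'^[n] (α + 1) with hψdef
  have hψs : ∀ n, ψ (n + 1) = φ' (ψ n) := fun n => Function.iterate_succ_apply' φ' n (α + 1)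
  have hψlt : ∀ n, ψ n < omega1.{v} := by
    intro n
    induction n with
    | zero => exact succ_lt_omega1 hα
    | succ n ih => rw [hψs]; exact hlt _ ih
  have hψmono : ∀ n, ψ n < ψ (n + 1) := fun n => by
    rw [hψs]; exact hself (ψ n) (hψlt n)
  set β : Ordinal.{v} := ⨆ i : ULift.{v} ℕ, ψ i.down with hβdef
  have hle : ∀ n : ℕ, ψ n ≤ β := fun n =>
    Ordinal.le_iSup (fun i : ULift.{v} ℕ => ψ i.down) (ULift.up n)
  have hβlt : β < omega1.{v} :=
    Cardinal.iSup_lt_ord_of_isRegular Cardinal.isRegular_aleph_one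
      (lt_of_le_of_lt Cardinal.mk_le_aleph0 Cardinal.aleph0_lt_aleph_one)
      (fun i => hψlt i.down)
  refine ⟨β, hβlt, le_trans (le_of_lt (hlt1 α)) (hle 0), ?_, ?_⟩
  · exact lt_of_lt_of_le (lt_of_le_of_lt (zero_le (a := α)) (hlt1 α)) (hle 0)
  · intro γ hγ
    obtain ⟨i, hn⟩ := Ordinal.lt_iSup_iff.1 hγ
    have h1 : φ' γ ≤ ψ (i.down + 1) := by rw [hψs]; exact hmono (le_of_lt hn)
    exact lt_of_le_of_lt h1 (lt_of_lt_of_le (hψmono (i.down + 1)) (hle (i.down + 2)))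

theorem exists_mono_bound (φ : Ordinal.{v} → Ordinal.{v}) (hφ : ∀ a, φ a < omega1.{v}) :
    ∃ φ' : Ordinal.{v} → Ordinal.{v},
      (∀ {a b : Ordinal.{v}}, a ≤ b → φ' a ≤ φ' b) ∧
      (∀ {a b : Ordinal.{v}}, a ≤ b → φ a ≤ φ' b) ∧
      (∀ a < omega1.{v}, φ' a < omega1.{v}) := by
  have hlt1 : ∀ δ : Ordinal.{v}, δ < δ + 1 := fun δ =>
    (Ordinal.add_one_eq_succ δ) ▸ Order.lt_succ δ
  refine ⟨fun α => Ordinal.bsup.{v, v} (α + 1) (fun γ _ => φ γ), ?_, ?_, ?_⟩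
  · intro a b h
    refine Ordinal.bsup_le_iff.2 fun γ hγ => ?_
    exact Ordinal.le_bsup _ γ (lt_of_lt_of_le hγ (add_le_add_left h 1))
  · intro a b h
    exact Ordinal.le_bsup _ a (lt_of_le_of_lt h (hlt1 b))
  · intro a ha
    refine Ordinal.bsup_lt_ord ?_ fun γ _ => hφ γ
    have h1 : (a + 1).card < Cardinal.aleph 1 := Cardinal.lt_ord.1 (succ_lt_omega1 ha)
    have h2 : (omega1.{v} : Ordinal).cof = Cardinal.aleph 1 := by
      rw [show (omega1.{v} : Ordinal) = (Cardinal.aleph 1).ord from rfl]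
      exact Cardinal.isRegular_aleph_one.cof_eq
    rwa [h2]

end CoanAux


namespace CoanAux2
universe v u

/-- finite initial segment of `y` as a list -/
def listOf (y : ℕ → ℕ) (n : ℕ) : List ℕ := (List.range n).map y

theorem listOf_length (y : ℕ → ℕ) (n : ℕ) : (listOf y n).length = n := by simp [listOf]

theorem listOf_succ (y : ℕ → ℕ) (n : ℕ) : listOf y (n + 1) = listOf y n ++ [y n] := by
  simp [listOf, List.range_succ]

theorem listOf_zero (y : ℕ → ℕ) : listOf y 0 = [] := rfl

/-- the cylinder determined by a finite sequence -/
def cylSet (t : List ℕ) : Set (ℕ → ℕ) := {z | ∀ i, ∀ h : i < t.length, z i = t[i]}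

theorem cylSet_listOf (y : ℕ → ℕ) (n : ℕ) : cylSet (listOf y n) = PiNat.cylinder y n := by
  ext z
  simp only [cylSet, listOf, mem_setOf_eq, PiNat.mem_cylinder_iff, List.length_map,
    List.length_range, List.getElem_map, List.getElem_range]

theorem mem_cylSet_listOf_self (y : ℕ → ℕ) (n : ℕ) : y ∈ cylSet (listOf y n) := by
  rw [cylSet_listOf]; exact PiNat.self_mem_cylinder y n

/-- reconstructing a branch from a chain of one-step extensions -/
theorem chain_branch (g : ℕ → List ℕ) (hg : ∀ n, ∃ k, g (n + 1) = g n ++ [k]) :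
    ∃ y : ℕ → ℕ, ∀ n, listOf y (g n).length = g n := by
  have hpre : ∀ m n, m ≤ n → g m <+: g n := by
    intro m n h
    induction n, h using Nat.le_induction with
    | base => exact List.prefix_refl _
    | succ n' hn ih =>
      obtain ⟨k, hk⟩ := hg n'
      rw [hk]
      exact ih.trans (List.prefix_append _ _)
  have hlen : ∀ n, (g n).length = (g 0).length + n := by
    intro n
    induction n with
    | zero => rfl
    | succ n ih =>
      obtain ⟨k, hk⟩ := hg n
      simp [hk, ih, Nat.add_assoc]
  have hlen' : ∀ i, i < (g (i + 1)).length := by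
    intro i; rw [hlen]; omega
  refine ⟨fun i => (g (i + 1))[i]'(hlen' i), fun n => ?_⟩
  apply List.ext_getElem (by simp [listOf])
  intro i h1 h2
  have h1' : i < n + 1 + (g 0).length := by
    simp only [listOf, List.length_map, List.length_range] at h1
    rw [hlen] at h1; omega
  simp only [listOf, List.getElem_map, List.getElem_range]
  -- show (g (i+1))[i] = (g n)[i]
  rcases le_total (i + 1) n with h | h
  · exact (hpre (i + 1) n h).getElem (hlen' i)
  · exact ((hpre n (i + 1) h).getElem h2).symm

variable {P : Type u} [TopologicalSpace P]

/-- if `x` is in the closure of images of cofinally many cylinders around `y`,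
then `x = f y` -/
theorem eq_of_cofinal_closure [T2Space P] {f : (ℕ → ℕ) → P} (hf : Continuous f) {x : P}
    {y : ℕ → ℕ} (h : ∀ m, ∃ m' ≥ m, x ∈ closure (f '' PiNat.cylinder y m')) : x = f y := by
  by_contra hne
  obtain ⟨U, V, hU, hV, hxU, hyV, hUV⟩ := t2_separation hne
  have : y ∈ f ⁻¹' V := hyV
  obtain ⟨s, ⟨z, m, rfl⟩, hzs, hsV⟩ :=
    (PiNat.isTopologicalBasis_cylinders _).exists_subset_of_mem_open this (hV.preimage hf)
  rw [← PiNat.mem_cylinder_iff_eq.1 hzs] at hsV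
  obtain ⟨m', hm', hx⟩ := h m
  have hsub : f '' PiNat.cylinder y m' ⊆ V := by
    rintro p ⟨w, hw, rfl⟩
    exact hsV (PiNat.cylinder_anti y hm' hw)
  have hxV : x ∈ closure V := closure_mono hsub hx
  rcases mem_closure_iff.1 hxV U hU hxU with ⟨p, hpU, hpV⟩
  exact absurd (hUV.ne_of_mem hpU hpV) (fun h => h rfl)

/-- pair version, in a regular space -/
theorem pair_eq_of_cofinal_closure [T2Space P] [RegularSpace P] {f g : (ℕ → ℕ) → P}
    (hf : Continuous f) (hg : Continuous g) {z w : ℕ → ℕ}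
    (h : ∀ m, ∃ m₁ ≥ m, ∃ m₂ ≥ m,
      (closure (g '' PiNat.cylinder z m₁) ∩ closure (f '' PiNat.cylinder w m₂)).Nonempty) :
    g z = f w := by
  by_contra hne
  obtain ⟨U, V, hU, hV, hxU, hyV, hUV⟩ := t2_separation hne
  obtain ⟨N₁, hN₁, hN₁c, hN₁U⟩ := exists_mem_nhds_isClosed_subset (hU.mem_nhds hxU)
  obtain ⟨N₂, hN₂, hN₂c, hN₂V⟩ := exists_mem_nhds_isClosed_subset (hV.mem_nhds hyV)
  -- find cylinders mapping into the interiors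
  have key : ∀ (k : (ℕ → ℕ) → P), Continuous k → ∀ (u : ℕ → ℕ) (N : Set P), N ∈ nhds (k u) →
      IsClosed N → ∃ m, closure (k '' PiNat.cylinder u m) ⊆ N := by
    intro k hk u N hN hNc
    have : u ∈ k ⁻¹' interior N := mem_interior_iff_mem_nhds.2 hN
    obtain ⟨s, ⟨z', m, rfl⟩, hzs, hsN⟩ :=
      (PiNat.isTopologicalBasis_cylinders _).exists_subset_of_mem_open this
        (isOpen_interior.preimage hk)
    rw [← PiNat.mem_cylinder_iff_eq.1 hzs] at hsN
    refine ⟨m, ?_⟩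
    have : k '' PiNat.cylinder u m ⊆ N := by
      rintro p ⟨q, hq, rfl⟩
      exact interior_subset (hsN hq)
    exact hNc.closure_subset_iff.2 this
  obtain ⟨m₁, hm₁⟩ := key g hg z N₁ hN₁ hN₁c
  obtain ⟨m₂, hm₂⟩ := key f hf w N₂ hN₂ hN₂c
  obtain ⟨a, ha₁, b, hb₁, p, hp⟩ := h (max m₁ m₂)
  have h1 : closure (g '' PiNat.cylinder z a) ⊆ N₁ :=
    le_trans (closure_mono (image_mono (PiNat.cylinder_anti z (le_trans (le_max_left _ _) ha₁)))) hm₁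
  have h2 : closure (f '' PiNat.cylinder w b) ⊆ N₂ :=
    le_trans (closure_mono (image_mono (PiNat.cylinder_anti w (le_trans (le_max_right _ _) hb₁)))) hm₂
  exact absurd (hUV.ne_of_mem (hN₁U (h1 hp.1)) (hN₂V (h2 hp.2))) (fun h => h rfl)

end CoanAux2


namespace CoanAux3
open CoanAux CoanAux2
universe v u


variable {P : Type u} [TopologicalSpace P]

/-- the (closed) set of points attached to node `t` -/
def inT (f : (ℕ → ℕ) → P) (t : List ℕ) : Set P := closure (f '' cylSet t)

/-- the hierarchy of Borel approximations -/
noncomputable def W (f : (ℕ → ℕ) → P) (α : Ordinal.{v}) (t : List ℕ) : Set P :=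
  {x | ∀ n : ℕ, x ∈ inT f (t ++ [n]) →
    ∃ β : {β : Ordinal.{v} // β < α}, x ∈ W f β.1 (t ++ [n])}
termination_by α
decreasing_by exact β.2

theorem mem_W {f : (ℕ → ℕ) → P} {x : P} {α : Ordinal.{v}} {t : List ℕ} :
    x ∈ W f α t ↔ ∀ n : ℕ, x ∈ inT f (t ++ [n]) → ∃ β < α, x ∈ W f β (t ++ [n]) := by
  rw [W]
  constructor
  · intro h n hn
    obtain ⟨β, hβ⟩ := h n hn
    exact ⟨β.1, β.2, hβ⟩
  · intro h n hn
    obtain ⟨β, hβ, hm⟩ := h n hn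
    exact ⟨⟨β, hβ⟩, hm⟩

theorem W_mono {f : (ℕ → ℕ) → P} {α α' : Ordinal.{v}} (h : α ≤ α') (t : List ℕ) :
    W f α t ⊆ W f α' t := by
  intro x hx
  rw [mem_W] at hx ⊢
  intro n hn
  obtain ⟨β, hβ, hm⟩ := hx n hn
  exact ⟨β, lt_of_lt_of_le hβ h, hm⟩

theorem measurableSet_W [MeasurableSpace P] [OpensMeasurableSpace P] (f : (ℕ → ℕ) → P) :
    ∀ α : Ordinal.{v}, α < omega1.{v} → ∀ t : List ℕ, MeasurableSet (W f α t) := by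
  intro α
  induction α using Ordinal.induction with
  | _ α IH =>
    intro hα t
    have : W f α t = ⋂ n : ℕ, ((inT f (t ++ [n]))ᶜ ∪ ⋃ β ∈ Set.Iio α, W f β (t ++ [n])) := by
      ext x
      rw [mem_W]
      simp only [mem_iInter, mem_union, mem_compl_iff, mem_iUnion, mem_Iio, exists_prop]
      exact forall_congr' fun n => imp_iff_not_or
    rw [this]
    refine MeasurableSet.iInter fun n => MeasurableSet.union
      (isClosed_closure.measurableSet.compl)
      (MeasurableSet.biUnion (CoanAux.countable_Iio hα) fun β hβ => IH β hβ (lt_trans hβ hα) _)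


theorem wf_of_no_chain {A : Type*} {r : A → A → Prop}
    (H : ∀ g : ℕ → A, ¬ ∀ n, r (g (n + 1)) (g n)) : WellFounded r := by
  constructor
  intro a
  by_contra ha
  let F : ∀ _ : ℕ, {b : A // ¬ Acc r b} := fun n =>
    Nat.rec ⟨a, ha⟩ (fun _ p =>
      ⟨(exists_not_acc_lt_of_not_acc p.2).choose,
       (exists_not_acc_lt_of_not_acc p.2).choose_spec.1⟩) n
  exact H (fun n => (F n).1) (fun n =>
    (exists_not_acc_lt_of_not_acc (F n).2).choose_spec.2)

/-- the tree relation attached to a point `x` -/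
def xRel (f : (ℕ → ℕ) → P) (x : P) : ULift.{v} (List ℕ) → ULift.{v} (List ℕ) → Prop :=
  fun t' t => (∃ n : ℕ, t'.down = t.down ++ [n]) ∧ x ∈ inT f t'.down

theorem listOf_append (y : ℕ → ℕ) (n : ℕ) :
    listOf y (n + 1) = listOf y n ++ [y n] := by simp [listOf, List.range_succ]

theorem xRel_wf [T2Space P] {f : (ℕ → ℕ) → P} (hf : Continuous f) {x : P}
    (hx : x ∉ Set.range f) : WellFounded (xRel.{v} f x) := by
  refine wf_of_no_chain fun e hstep => ?_
  set g : ℕ → List ℕ := fun n => (e n).down with hgdef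
  have hchain : ∀ n, ∃ k, g (n + 1) = g n ++ [k] := fun n => (hstep n).1
  have hmem : ∀ n, x ∈ inT f (g (n + 1)) := fun n => (hstep n).2
  obtain ⟨y, hy⟩ := chain_branch g hchain
  have hlen : ∀ n, (g n).length = (g 0).length + n := by
    intro n
    induction n with
    | zero => rfl
    | succ n ih => obtain ⟨k, hk⟩ := hchain n; simp [hk, ih, Nat.add_assoc]
  have : x = f y := by
    apply eq_of_cofinal_closure hf
    intro m
    refine ⟨(g (m + 1)).length, by rw [hlen]; omega, ?_⟩
    have h2 : x ∈ inT f (listOf y (g (m + 1)).length) := by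
      rw [hy (m + 1)]; exact hmem m
    rw [← cylSet_listOf]
    exact h2
  exact hx ⟨y, this.symm⟩

theorem not_mem_W {f : (ℕ → ℕ) → P} (y : ℕ → ℕ) :
    ∀ α : Ordinal.{v}, ∀ n : ℕ, f y ∉ W f α (listOf y n) := by
  intro α
  induction α using Ordinal.induction with
  | _ α IH =>
    intro n hmem
    rw [mem_W] at hmem
    have hin : f y ∈ inT f (listOf y n ++ [y n]) := by
      rw [← listOf_append]
      exact subset_closure ⟨y, mem_cylSet_listOf_self y (n + 1), rfl⟩
    obtain ⟨β, hβ, hm⟩ := hmem (y n) hin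
    rw [← listOf_append] at hm
    exact IH β hβ (n + 1) hm

theorem mem_W_wrank {f : (ℕ → ℕ) → P} {x : P} (h : WellFounded (xRel.{v} f x)) (t : List ℕ) :
    x ∈ W f (wrank h (ULift.up t)) t := by
  suffices H : ∀ u : ULift.{v} (List ℕ), x ∈ W f (wrank h u) u.down from H (ULift.up t)
  intro u
  induction u using h.induction with
  | _ u IH =>
    rw [mem_W]
    intro n hn
    have hrel : xRel f x (ULift.up (u.down ++ [n])) u := ⟨⟨n, rfl⟩, hn⟩
    exact ⟨wrank h (ULift.up (u.down ++ [n])), wrank_lt h hrel, IH _ hrel⟩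

/-- `Σ¹₁`-boundedness for the hierarchy `W f · []` -/
theorem boundedness [T2Space P] [RegularSpace P] {f : (ℕ → ℕ) → P} (hf : Continuous f)
    {S : Set P} (hS : AnalyticSet S) (hdisj : ∀ p ∈ S, p ∉ Set.range f) :
    ∃ ρ < omega1.{v}, S ⊆ W f ρ ([] : List ℕ) := by
  rw [AnalyticSet] at hS
  rcases hS with rfl | ⟨g, hg, rfl⟩
  · exact ⟨0, omega1_pos, by simp⟩
  set R : ULift.{v} (List ℕ × List ℕ) → ULift.{v} (List ℕ × List ℕ) → Prop :=
    fun p' p => (∃ m : ℕ, p'.down.1 = p.down.1 ++ [m]) ∧ (∃ n : ℕ, p'.down.2 = p.down.2 ++ [n]) ∧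
      (closure (g '' cylSet p'.down.1) ∩ closure (f '' cylSet p'.down.2)).Nonempty with hR
  have hwfR : WellFounded R := by
    refine wf_of_no_chain fun e hstep => ?_
    set g1 : ℕ → List ℕ := fun n => (e n).down.1 with hg1
    set g2 : ℕ → List ℕ := fun n => (e n).down.2 with hg2
    obtain ⟨z, hz⟩ := chain_branch g1 fun n => (hstep n).1
    obtain ⟨w, hw⟩ := chain_branch g2 fun n => (hstep n).2.1
    have hlen1 : ∀ n, (g1 n).length = (g1 0).length + n := by
      intro n
      induction n with
      | zero => rfl
      | succ n ih => obtain ⟨k, hk⟩ := (hstep n).1; show (g1 (n+1)).length = _; rw [show g1 (n+1) = g1 n ++ [k] from hk]; simp [ih, Nat.add_assoc]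
    have hlen2 : ∀ n, (g2 n).length = (g2 0).length + n := by
      intro n
      induction n with
      | zero => rfl
      | succ n ih => obtain ⟨k, hk⟩ := (hstep n).2.1; show (g2 (n+1)).length = _; rw [show g2 (n+1) = g2 n ++ [k] from hk]; simp [ih, Nat.add_assoc]
    have : g z = f w := by
      apply pair_eq_of_cofinal_closure hf hg
      intro m
      refine ⟨(g1 (m + 1)).length, by rw [hlen1]; omega,
        (g2 (m + 1)).length, by rw [hlen2]; omega, ?_⟩
      rw [← cylSet_listOf, ← cylSet_listOf, hz (m + 1), hw (m + 1)]
      exact (hstep m).2.2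
    exact hdisj (g z) (Set.mem_range_self z) (this ▸ Set.mem_range_self w)
  refine ⟨wrank hwfR (ULift.up ([], [])), wrank_lt_omega1 hwfR _, ?_⟩
  rintro x ⟨z, rfl⟩
  have hxnr : g z ∉ Set.range f := hdisj (g z) (Set.mem_range_self z)
  have hwfx := xRel_wf hf hxnr
  have h1 : g z ∈ W f (wrank hwfx (ULift.up ([] : List ℕ))) ([] : List ℕ) := mem_W_wrank hwfx []
  refine W_mono ?_ _ h1
  have := wrank_le_of_hom hwfx hwfR
    (fun t => ULift.up (listOf z t.down.length, t.down)) ?_ (ULift.up ([] : List ℕ))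
  · simpa [listOf] using this
  · rintro a b ⟨⟨n, hn⟩, hmem⟩
    refine ⟨⟨z b.down.length, ?_⟩, ⟨n, by simp [hn]⟩, ?_⟩
    · show listOf z a.down.length = listOf z b.down.length ++ [z b.down.length]
      rw [hn]
      simp only [List.length_append, List.length_cons, List.length_nil]
      exact listOf_append z b.down.length
    · exact ⟨g z, subset_closure ⟨z, mem_cylSet_listOf_self z _, rfl⟩, hmem⟩

theorem W_union [T2Space P] {f : (ℕ → ℕ) → P} (hf : Continuous f) :
    (Set.range f)ᶜ = ⋃ α ∈ Set.Iio omega1.{v}, W f α ([] : List ℕ) := by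
  apply Set.Subset.antisymm
  · intro x hx
    have hwf := xRel_wf hf hx
    exact Set.mem_biUnion (wrank_lt_omega1 hwf (ULift.up [])) (mem_W_wrank hwf [])
  · intro x hx
    obtain ⟨α, _, hm⟩ := Set.mem_iUnion₂.1 hx
    rintro ⟨y, rfl⟩
    exact not_mem_W y α 0 hm

end CoanAux3


open CoanAux CoanAux2 CoanAux3 in
/-- A coanalytic equivalence relation on a Polish space is the union of an
increasing `ω₁`-sequence of Borel sets which are equivalence relations on a
club of indices. -/
theorem coanalytic_equivalence_increasing_borel_approximations
    {X : Type*} [TopologicalSpace X] [PolishSpace X]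
    [MeasurableSpace X] [BorelSpace X]
    (E : X → X → Prop) (hE : Equivalence E)
    (hEcoan : AnalyticSet ({p : X × X | E p.1 p.2}ᶜ)) :
    ∃ Eseq : Ordinal → Set (X × X),
      (∀ α < omega1, MeasurableSet (Eseq α)) ∧
      (∀ α β : Ordinal, α ≤ β → β < omega1 → Eseq α ⊆ Eseq β) ∧
      ({p : X × X | E p.1 p.2} = ⋃ α ∈ Iio omega1, Eseq α) ∧
      ∃ C : Set Ordinal, C ⊆ Iio omega1 ∧
        (∀ α < omega1, ∃ β ∈ C, α ≤ β) ∧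
        (∀ S : Set Ordinal, S ⊆ C → S.Nonempty →
          (∃ β < omega1, ∀ s ∈ S, s ≤ β) → sSup S ∈ C) ∧
        (∀ α ∈ C, Equivalence (fun x y : X => (x, y) ∈ Eseq α)) := by
  haveI : T3Space (X × X) := by
    letI := TopologicalSpace.metrizableSpaceMetric (X × X); infer_instance
  have hlt1 : ∀ δ : Ordinal, δ < δ + 1 := fun δ =>
    (Ordinal.add_one_eq_succ δ) ▸ Order.lt_succ δ
  rw [AnalyticSet] at hEcoan
  rcases hEcoan with hA | ⟨f, hf, hA⟩
  · -- the relation is all of `X × X`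
    have heq : {p : X × X | E p.1 p.2} = univ := compl_empty_iff.1 hA
    refine ⟨fun _ => univ, fun _ _ => MeasurableSet.univ, fun _ _ _ _ => subset_rfl, ?_,
      Iio omega1, subset_rfl, fun α hα => ⟨α, hα, le_rfl⟩, ?_, ?_⟩
    · rw [heq]
      ext p
      simp only [mem_univ, mem_iUnion, true_iff, exists_prop]
      exact ⟨0, omega1_pos, trivial⟩
    · rintro S _ hSne ⟨b, hb, hub⟩
      exact lt_of_le_of_lt (csSup_le hSne hub) hb
    · exact fun α _ => ⟨fun _ => mem_univ _, fun _ => mem_univ _, fun _ _ => mem_univ _⟩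
  · -- the relation is the complement of `range f`
    set B : Ordinal → Set (X × X) := fun α => W f α ([] : List ℕ) with hBdef
    have hEeq : {p : X × X | E p.1 p.2} = (range f)ᶜ := by rw [hA, compl_compl]
    have hBsub : ∀ α, B α ⊆ {p : X × X | E p.1 p.2} := by
      intro α p hp
      by_contra h
      have : p ∈ range f := by rw [hA]; exact h
      obtain ⟨y, rfl⟩ := this
      exact not_mem_W y α 0 hp
    -- boundedness applications
    have hdisjOfSub : ∀ S : Set (X × X), S ⊆ {p : X × X | E p.1 p.2} →
        ∀ p ∈ S, p ∉ range f := by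
      intro S hS p hp
      have := hS hp
      rw [hEeq] at this
      exact this
    have hdiag : ∃ d < omega1, Set.diagonal X ⊆ B d := by
      refine boundedness hf (isClosed_diagonal.measurableSet.analyticSet) ?_
      refine hdisjOfSub _ ?_
      intro p hp
      have h : p.1 = p.2 := hp
      show E p.1 p.2
      rw [← h]
      exact hE.refl p.1
    have hsymmB : ∀ α < omega1, ∃ b < omega1, Prod.swap ⁻¹' (B α) ⊆ B b := by
      intro α hα
      refine boundedness hf
        (((measurableSet_W f α hα []).preimage measurable_swap).analyticSet) ?_
      refine hdisjOfSub _ ?_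
      intro p hp
      have := hBsub α hp
      exact hE.symm this
    have htransB : ∀ α < omega1, ∃ b < omega1,
        ∀ x y z : X, (x, y) ∈ B α → (y, z) ∈ B α → (x, z) ∈ B b := by
      intro α hα
      have hin : MeasurableSet {q : X × X × X | (q.1, q.2.1) ∈ B α ∧ (q.2.1, q.2.2) ∈ B α} := by
        refine MeasurableSet.inter ?_ ?_
        · exact (measurableSet_W f α hα []).preimage
            (measurable_fst.prodMk (measurable_fst.comp measurable_snd))
        · exact (measurableSet_W f α hα []).preimage
            ((measurable_fst.comp measurable_snd).prodMk (measurable_snd.comp measurable_snd))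
      have hana : AnalyticSet ((fun q : X × X × X => (q.1, q.2.2)) ''
          {q : X × X × X | (q.1, q.2.1) ∈ B α ∧ (q.2.1, q.2.2) ∈ B α}) :=
        hin.analyticSet.image_of_continuous
          (continuous_fst.prodMk (continuous_snd.comp continuous_snd))
      obtain ⟨b, hb, hsub⟩ := boundedness hf hana (hdisjOfSub _ (by
        rintro p ⟨q, ⟨h1, h2⟩, rfl⟩
        have e1 : E q.1 q.2.1 := hBsub α h1
        have e2 : E q.2.1 q.2.2 := hBsub α h2
        exact hE.trans e1 e2))
      exact ⟨b, hb, fun x y z h1 h2 => hsub ⟨(x, (y, z)), ⟨h1, h2⟩, rfl⟩⟩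
    have key : ∀ α : Ordinal, ∃ β : Ordinal, β < omega1 ∧ (α < omega1 →
        (α < β ∧ Set.diagonal X ⊆ B β ∧ Prod.swap ⁻¹' (B α) ⊆ B β ∧
          ∀ x y z : X, (x, y) ∈ B α → (y, z) ∈ B α → (x, z) ∈ B β)) := by
      intro α
      by_cases hα : α < omega1
      · obtain ⟨d, hd, hdsub⟩ := hdiag
        obtain ⟨b2, hb2, hs⟩ := hsymmB α hα
        obtain ⟨b3, hb3, ht⟩ := htransB α hα
        refine ⟨max (max d b2) (max b3 (α + 1)),
          max_lt (max_lt hd hb2) (max_lt hb3 (succ_lt_omega1 hα)), fun _ => ⟨?_, ?_, ?_, ?_⟩⟩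
        · exact lt_of_lt_of_le (hlt1 α) (le_trans (le_max_right b3 _) (le_max_right _ _))
        · exact hdsub.trans (W_mono (le_trans (le_max_left d b2) (le_max_left _ _)) [])
        · exact hs.trans (W_mono (le_trans (le_max_right d b2) (le_max_left _ _)) [])
        · exact fun x y z h1 h2 => W_mono
            (le_trans (le_max_left b3 (α + 1)) (le_max_right _ _)) [] (ht x y z h1 h2)
      · exact ⟨0, omega1_pos, fun h => absurd h hα⟩
    choose φ hφ1 hφ2 using key
    obtain ⟨φ', hφ'mono, hφ'le, hφ'lt⟩ := exists_mono_bound φ hφ1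
    have hself : ∀ α < omega1, α < φ' α := fun α hα =>
      lt_of_lt_of_le (hφ2 α hα).1 (hφ'le le_rfl)
    set C : Set Ordinal := {α : Ordinal | α < omega1 ∧ 0 < α ∧ ∀ β < α, φ' β < α} with hCdef
    refine ⟨fun α => ⋃ β ∈ Iio α, B β, ?_, ?_, ?_, C, fun α hα => hα.1, ?_, ?_, ?_⟩
    · -- measurability
      intro α hα
      exact MeasurableSet.biUnion (countable_Iio hα)
        fun β hβ => measurableSet_W f β (lt_trans hβ hα) []
    · -- monotone
      intro α β hle _ p hp
      obtain ⟨γ, hγ, hm⟩ := mem_iUnion₂.1 hp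
      exact mem_iUnion₂.2 ⟨γ, Set.mem_Iio.2 (lt_of_lt_of_le (Set.mem_Iio.1 hγ) hle), hm⟩
    · -- union
      rw [hEeq, W_union hf]
      apply Subset.antisymm
      · intro p hp
        obtain ⟨α, hα, hm⟩ := mem_iUnion₂.1 hp
        exact mem_iUnion₂.2 ⟨α + 1, Set.mem_Iio.2 (succ_lt_omega1 (Set.mem_Iio.1 hα)),
          mem_iUnion₂.2 ⟨α, Set.mem_Iio.2 (hlt1 α), hm⟩⟩
      · intro p hp
        obtain ⟨α, hα, hm⟩ := mem_iUnion₂.1 hp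
        obtain ⟨β, hβ, hm'⟩ := mem_iUnion₂.1 hm
        exact mem_iUnion₂.2 ⟨β, Set.mem_Iio.2 (lt_trans (Set.mem_Iio.1 hβ) (Set.mem_Iio.1 hα)), hm'⟩
    · -- unbounded
      intro α hα
      obtain ⟨β, h1, h2, h3, h4⟩ := omega1_unbounded_iterate φ' (fun h => hφ'mono h)
        hself hφ'lt hα
      exact ⟨β, ⟨h1, h3, h4⟩, h2⟩
    · -- closed under suprema
      rintro S hSC hSne ⟨b, hb, hub⟩
      have hbdd : BddAbove S := ⟨b, fun s hs => hub s hs⟩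
      refine ⟨lt_of_le_of_lt (csSup_le hSne hub) hb, ?_, ?_⟩
      · obtain ⟨s0, hs0⟩ := hSne
        exact lt_of_lt_of_le (hSC hs0).2.1 (le_csSup hbdd hs0)
      · intro γ hγ
        obtain ⟨s, hsS, hγs⟩ := exists_lt_of_lt_csSup hSne hγ
        exact lt_of_lt_of_le ((hSC hsS).2.2 γ hγs) (le_csSup hbdd hsS)
    · -- equivalence on the club
      rintro α ⟨hα, hα0, hcl⟩
      constructor
      · intro x
        refine mem_iUnion₂.2 ⟨φ' 0, hcl 0 hα0, ?_⟩
        exact W_mono (hφ'le le_rfl) [] ((hφ2 0 omega1_pos).2.1 rfl)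
      · intro x y hxy
        obtain ⟨β, hβ, hm⟩ := mem_iUnion₂.1 hxy
        have hβω : β < omega1 := lt_trans hβ hα
        have h1 : (y, x) ∈ B (φ β) := (hφ2 β hβω).2.2.1 hm
        exact mem_iUnion₂.2 ⟨φ' β, hcl β hβ, W_mono (hφ'le le_rfl) [] h1⟩
      · intro x y z hxy hyz
        obtain ⟨β₁, hβ₁, hm1⟩ := mem_iUnion₂.1 hxy
        obtain ⟨β₂, hβ₂, hm2⟩ := mem_iUnion₂.1 hyz
        have hδ : max β₁ β₂ < α := max_lt hβ₁ hβ₂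
        have hδω : max β₁ β₂ < omega1 := lt_trans hδ hα
        have h1 : (x, y) ∈ B (max β₁ β₂) := W_mono (le_max_left _ _) [] hm1
        have h2 : (y, z) ∈ B (max β₁ β₂) := W_mono (le_max_right _ _) [] hm2
        have h3 := (hφ2 (max β₁ β₂) hδω).2.2.2 x y z h1 h2
        exact mem_iUnion₂.2 ⟨φ' (max β₁ β₂), hcl _ hδ, W_mono (hφ'le le_rfl) [] h3⟩
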